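/- The domain D_{4,2} is not single-peaked: there is no linear order (axis) ◁ on {1,2,3,4} such that every order in D_{4,2} is single-peaked with respect to ◁. -/

import Mathlib

open Set

/-- `r` is a (strict) linear order: irreflexive, transitive and total. -/
def IsLinOrder {A : Type*} (r : A → A → Prop) : Prop :=
  IsStrictTotalOrder A r

/-- Strict pairwise majority relation of a profile `P` of `m` orders:
`a` is majority-preferred to `b` if more orders in the profile rank `a` above `b`
than rank `b` above `a`. -/
def MajPrefers {A : Type*} {m : ℕ} (P : Fin m → (A → A → Prop)) (a b : A) : Prop :=
  Nat.card {i : Fin m // P i a b} > Nat.card {i : Fin m // P i b a}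

/-- `D` is a Condorcet domain: every profile of an odd number of (not necessarily
distinct) orders from `D` has a transitive strict pairwise majority relation. -/
def IsCondorcet {A : Type*} (D : Set (A → A → Prop)) : Prop :=
  ∀ (m : ℕ) (P : Fin m → (A → A → Prop)), Odd m → (∀ i, P i ∈ D) →
    Transitive (MajPrefers P)

/-- `D` is a maximal Condorcet domain: it is Condorcet, and no set of linear
orders strictly containing it is Condorcet. -/
def IsMaximalCondorcet {A : Type*} (D : Set (A → A → Prop)) : Prop :=
  IsCondorcet D ∧
    ∀ D' : Set (A → A → Prop), (∀ r ∈ D', IsLinOrder r) → D ⊂ D' → ¬ IsCondorcet D'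

/-- Never-top condition for `x` on the triple `T`: no order in `D` ranks `x`
above both other elements of `T`. -/
def NeverTop {A : Type*} (D : Set (A → A → Prop)) (T : Finset A) (x : A) : Prop :=
  ∀ p ∈ D, ¬ (∀ y ∈ T, y ≠ x → p x y)

/-- Never-bottom condition for `x` on the triple `T`: no order in `D` ranks `x`
below both other elements of `T`. -/
def NeverBottom {A : Type*} (D : Set (A → A → Prop)) (T : Finset A) (x : A) : Prop :=
  ∀ p ∈ D, ¬ (∀ y ∈ T, y ≠ x → p y x)

/-- Never-middle condition for `x` on the triple `T`: no order in `D` ranks `x`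
between the two other elements of `T`. -/
def NeverMiddle {A : Type*} (D : Set (A → A → Prop)) (T : Finset A) (x : A) : Prop :=
  ∀ p ∈ D, ¬ (∃ y ∈ T, ∃ z ∈ T, y ≠ x ∧ z ≠ x ∧ p y x ∧ p x z)

/-- `D` is peak-pit: every triple has an alternative that is never-top or never-bottom. -/
def IsPeakPit {A : Type*} (D : Set (A → A → Prop)) : Prop :=
  ∀ T : Finset A, T.card = 3 → ∃ x ∈ T, NeverTop D T x ∨ NeverBottom D T x

/-- `D` is Arrow's single-peaked: every triple has a never-bottom alternative. -/
def IsArrowSP {A : Type*} (D : Set (A → A → Prop)) : Prop :=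
  ∀ T : Finset A, T.card = 3 → ∃ x ∈ T, NeverBottom D T x

/-- `D` has maximal width: it contains two completely reversed linear orders. -/
def HasMaximalWidth {A : Type*} (D : Set (A → A → Prop)) : Prop :=
  ∃ p ∈ D, (fun a b => p b a) ∈ D

/-- A generalised arrangement of `n` pseudolines: continuous functions on `[0,1]`,
starting (at `0`) in strictly decreasing order of index, ending (at `1`) at pairwise
distinct values; every two of them intersect in a finite set of interior points, at
each of which their difference changes sign; and no three share a common point. -/
structure GenArrangement (n : ℕ) where
  line : Fin n → ℝ → ℝ
  continuous : ∀ i, ContinuousOn (line i) (Set.Icc (0:ℝ) 1)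
  start_anti : ∀ i j : Fin n, i < j → line j 0 < line i 0
  end_distinct : ∀ i j : Fin n, i ≠ j → line i 1 ≠ line j 1
  inter_finite : ∀ i j : Fin n, i ≠ j →
    {x : ℝ | x ∈ Set.Ioo (0:ℝ) 1 ∧ line i x = line j x}.Finite
  sign_change : ∀ i j : Fin n, i ≠ j → ∀ x ∈ Set.Ioo (0:ℝ) 1, line i x = line j x →
    ∃ ε > 0, Set.Ioo (x - ε) (x + ε) ⊆ Set.Ioo (0:ℝ) 1 ∧
      ∀ y ∈ Set.Ioo (x - ε) x, ∀ z ∈ Set.Ioo x (x + ε),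
        (line i y - line j y) * (line i z - line j z) < 0
  no_triple : ∀ i j k : Fin n, i ≠ j → j ≠ k → i ≠ k → ∀ x ∈ Set.Icc (0:ℝ) 1,
    ¬ (line i x = line j x ∧ line j x = line k x)

namespace GenArrangement

/-- The set `Z(i,j)` of interior intersection points of pseudolines `i` and `j`. -/
def Z {n : ℕ} (g : GenArrangement n) (i j : Fin n) : Set ℝ :=
  {x : ℝ | x ∈ Set.Ioo (0:ℝ) 1 ∧ g.line i x = g.line j x}

/-- The level of an intersection point `x ∈ Z(i,j)`: the number of indices
`k ∉ {i,j}` with `f k x > f i x`. -/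
noncomputable def level {n : ℕ} (g : GenArrangement n) (i j : Fin n) (x : ℝ) : ℕ :=
  Nat.card {k : Fin n // k ≠ i ∧ k ≠ j ∧ g.line i x < g.line k x}

/-- `g` is tame: for every pair of pseudolines, all their intersection points
are at the same level. -/
def Tame {n : ℕ} (g : GenArrangement n) : Prop :=
  ∀ i j : Fin n, i ≠ j → ∀ x₁ ∈ g.Z i j, ∀ x₂ ∈ g.Z i j,
    g.level i j x₁ = g.level i j x₂

/-- `g` is a classical (simple) arrangement: every two pseudolines cross exactly once. -/
def IsClassical {n : ℕ} (g : GenArrangement n) : Prop :=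
  ∀ i j : Fin n, i ≠ j → ∃ x : ℝ, g.Z i j = {x}

/-- `S` is a chamber set of `g`: for some `x ∈ [0,1]` and level `y` avoiding all
the lines, `S` is the set of lines passing above the point `(x, y)`. -/
def IsChamberSet {n : ℕ} (g : GenArrangement n) (S : Set (Fin n)) : Prop :=
  ∃ x ∈ Set.Icc (0:ℝ) 1, ∃ y : ℝ, (∀ i, g.line i x ≠ y) ∧ S = {i : Fin n | y < g.line i x}

/-- The domain `D(g)`: all linear orders on `Fin n` all of whose prefix sets
(equivalently, all of whose upward closed sets) are chamber sets of `g`. -/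
def domain {n : ℕ} (g : GenArrangement n) : Set (Fin n → Fin n → Prop) :=
  {r | IsLinOrder r ∧
    ∀ S : Set (Fin n), (∀ a ∈ S, ∀ b, r b a → b ∈ S) → g.IsChamberSet S}

end GenArrangement

/-- `t` is the top element of the order `p`. -/
def IsTopOf {A : Type*} (p : A → A → Prop) (t : A) : Prop :=
  ∀ y, y ≠ t → p t y

/-- `p` is single-peaked with respect to the axis `ax`: whenever `a` lies strictly
between `b` and the top of `p` on the axis, `p` ranks `a` above `b`. -/
def SinglePeakedWRT {A : Type*} (ax p : A → A → Prop) : Prop :=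
  ∀ t, IsTopOf p t → ∀ a b, ((ax b a ∧ ax a t) ∨ (ax t a ∧ ax a b)) → p a b

/-- The linear order determined by a list, ranking `a` above `b` iff `a` occurs
earlier in the list. -/
def ofList {A : Type*} [DecidableEq A] (l : List A) (a b : A) : Prop :=
  l.idxOf a < l.idxOf b

/-- The domain `D_{4,2}` of eight linear orders on `{1,2,3,4}` (represented as
`Fin 4`, with alternative `i+1` encoded as `i`): 1234, 2134, 2314, 3214, 2341,
3241, 2431, 4231. -/
def D42 : Set (Fin 4 → Fin 4 → Prop) :=
  {ofList [0,1,2,3], ofList [1,0,2,3], ofList [1,2,0,3], ofList [2,1,0,3],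
   ofList [1,2,3,0], ofList [2,1,3,0], ofList [1,3,2,0], ofList [3,1,2,0]}

/-- The domain `D_{3,1}` of four linear orders on `{1,2,3}` (represented as `Fin 3`,
with alternative `i+1` encoded as `i`): 123, 213, 231, 321. -/
def D31 : Set (Fin 3 → Fin 3 → Prop) :=
  {ofList [0,1,2], ofList [1,0,2], ofList [1,2,0], ofList [2,1,0]}

/-- `D_{4,2}` is not single-peaked: there is no axis (linear order)
with respect to which all orders of `D_{4,2}` are single-peaked. -/
theorem D42_not_singlePeaked :
    ¬ ∃ ax : Fin 4 → Fin 4 → Prop, IsLinOrder ax ∧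
        ∀ p ∈ D42, SinglePeakedWRT ax p := by
  rintro ⟨ax, hlin, hsp⟩
  haveI : IsStrictTotalOrder (Fin 4) ax := hlin
  have irr : ∀ a, ¬ ax a a := fun a => irrefl a
  have tr : ∀ {a b c : Fin 4}, ax a b → ax b c → ax a c := fun h h' => _root_.trans h h'
  have h01 : ax 0 1 ∨ ax 1 0 := by by_contra hc; push_neg at hc; exact absurd (hlin.trichotomous 0 1 hc.1 hc.2) (by decide)
  have h02 : ax 0 2 ∨ ax 2 0 := by by_contra hc; push_neg at hc; exact absurd (hlin.trichotomous 0 2 hc.1 hc.2) (by decide)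
  have h03 : ax 0 3 ∨ ax 3 0 := by by_contra hc; push_neg at hc; exact absurd (hlin.trichotomous 0 3 hc.1 hc.2) (by decide)
  have h12 : ax 1 2 ∨ ax 2 1 := by by_contra hc; push_neg at hc; exact absurd (hlin.trichotomous 1 2 hc.1 hc.2) (by decide)
  have h13 : ax 1 3 ∨ ax 3 1 := by by_contra hc; push_neg at hc; exact absurd (hlin.trichotomous 1 3 hc.1 hc.2) (by decide)
  have h23 : ax 2 3 ∨ ax 3 2 := by by_contra hc; push_neg at hc; exact absurd (hlin.trichotomous 2 3 hc.1 hc.2) (by decide)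
  rcases h01 with h01 | h01
  · 
    rcases h02 with h02 | h02
    · 
      rcases h03 with h03 | h03
      · 
        rcases h12 with h12 | h12
        · 
          rcases h13 with h13 | h13
          · 
            rcases h23 with h23 | h23
            · 
              exact absurd (hsp _ (by unfold D42; simp : ofList [1, 3, 2, 0] ∈ D42) 1 (by unfold IsTopOf ofList; decide) 2 3 (Or.inr ⟨h12, h23⟩)) (by unfold ofList; decide)
            · 
              exact absurd (hsp _ (by unfold D42; simp : ofList [0, 1, 2, 3] ∈ D42) 0 (by unfold IsTopOf ofList; decide) 3 2 (Or.inr ⟨h03, h23⟩)) (by unfold ofList; decide)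
          · 
            rcases h23 with h23 | h23
            · 
              exact irr 1 (tr h12 (tr h23 h13))
            · 
              exact absurd (hsp _ (by unfold D42; simp : ofList [0, 1, 2, 3] ∈ D42) 0 (by unfold IsTopOf ofList; decide) 3 1 (Or.inr ⟨h03, h13⟩)) (by unfold ofList; decide)
        · 
          rcases h13 with h13 | h13
          · 
            rcases h23 with h23 | h23
            · 
              exact absurd (hsp _ (by unfold D42; simp : ofList [0, 1, 2, 3] ∈ D42) 0 (by unfold IsTopOf ofList; decide) 2 1 (Or.inr ⟨h02, h12⟩)) (by unfold ofList; decide)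
            · 
              exact irr 1 (tr h13 (tr h23 h12))
          · 
            rcases h23 with h23 | h23
            · 
              exact absurd (hsp _ (by unfold D42; simp : ofList [0, 1, 2, 3] ∈ D42) 0 (by unfold IsTopOf ofList; decide) 2 1 (Or.inr ⟨h02, h12⟩)) (by unfold ofList; decide)
            · 
              exact absurd (hsp _ (by unfold D42; simp : ofList [0, 1, 2, 3] ∈ D42) 0 (by unfold IsTopOf ofList; decide) 2 1 (Or.inr ⟨h02, h12⟩)) (by unfold ofList; decide)
      · 
        rcases h12 with h12 | h12
        · 
          rcases h13 with h13 | h13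
          · 
            rcases h23 with h23 | h23
            · 
              exact irr 0 (tr h01 (tr h13 h03))
            · 
              exact irr 0 (tr h01 (tr h13 h03))
          · 
            rcases h23 with h23 | h23
            · 
              exact irr 0 (tr h02 (tr h23 h03))
            · 
              exact absurd (hsp _ (by unfold D42; simp : ofList [1, 2, 3, 0] ∈ D42) 1 (by unfold IsTopOf ofList; decide) 0 3 (Or.inl ⟨h03, h01⟩)) (by unfold ofList; decide)
        · 
          rcases h13 with h13 | h13
          · 
            rcases h23 with h23 | h23
            · 
              exact irr 0 (tr h01 (tr h13 h03))
            · 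
              exact irr 0 (tr h01 (tr h13 h03))
          · 
            rcases h23 with h23 | h23
            · 
              exact irr 0 (tr h02 (tr h23 h03))
            · 
              exact absurd (hsp _ (by unfold D42; simp : ofList [0, 1, 2, 3] ∈ D42) 0 (by unfold IsTopOf ofList; decide) 2 1 (Or.inr ⟨h02, h12⟩)) (by unfold ofList; decide)
    · 
      rcases h03 with h03 | h03
      · 
        rcases h12 with h12 | h12
        · 
          rcases h13 with h13 | h13
          · 
            rcases h23 with h23 | h23
            · 
              exact irr 0 (tr h01 (tr h12 h02))
            · 
              exact irr 0 (tr h01 (tr h12 h02))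
          · 
            rcases h23 with h23 | h23
            · 
              exact irr 0 (tr h01 (tr h12 h02))
            · 
              exact irr 0 (tr h01 (tr h12 h02))
        · 
          rcases h13 with h13 | h13
          · 
            rcases h23 with h23 | h23
            · 
              exact absurd (hsp _ (by unfold D42; simp : ofList [1, 2, 0, 3] ∈ D42) 1 (by unfold IsTopOf ofList; decide) 0 2 (Or.inl ⟨h02, h01⟩)) (by unfold ofList; decide)
            · 
              exact irr 0 (tr h03 (tr h23 h02))
          · 
            rcases h23 with h23 | h23
            · 
              exact absurd (hsp _ (by unfold D42; simp : ofList [0, 1, 2, 3] ∈ D42) 0 (by unfold IsTopOf ofList; decide) 3 1 (Or.inr ⟨h03, h13⟩)) (by unfold ofList; decide)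
            · 
              exact irr 0 (tr h03 (tr h23 h02))
      · 
        rcases h12 with h12 | h12
        · 
          rcases h13 with h13 | h13
          · 
            rcases h23 with h23 | h23
            · 
              exact irr 0 (tr h01 (tr h12 h02))
            · 
              exact irr 0 (tr h01 (tr h12 h02))
          · 
            rcases h23 with h23 | h23
            · 
              exact irr 0 (tr h01 (tr h12 h02))
            · 
              exact irr 0 (tr h01 (tr h12 h02))
        · 
          rcases h13 with h13 | h13
          · 
            rcases h23 with h23 | h23
            · 
              exact irr 0 (tr h01 (tr h13 h03))
            · 
              exact irr 0 (tr h01 (tr h13 h03))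
          · 
            rcases h23 with h23 | h23
            · 
              exact absurd (hsp _ (by unfold D42; simp : ofList [0, 1, 2, 3] ∈ D42) 0 (by unfold IsTopOf ofList; decide) 3 2 (Or.inl ⟨h23, h03⟩)) (by unfold ofList; decide)
            · 
              exact absurd (hsp _ (by unfold D42; simp : ofList [1, 2, 0, 3] ∈ D42) 1 (by unfold IsTopOf ofList; decide) 0 2 (Or.inl ⟨h02, h01⟩)) (by unfold ofList; decide)
  · 
    rcases h02 with h02 | h02
    · 
      rcases h03 with h03 | h03
      · 
        rcases h12 with h12 | h12
        · 
          rcases h13 with h13 | h13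
          · 
            rcases h23 with h23 | h23
            · 
              exact absurd (hsp _ (by unfold D42; simp : ofList [1, 2, 0, 3] ∈ D42) 1 (by unfold IsTopOf ofList; decide) 0 2 (Or.inr ⟨h01, h02⟩)) (by unfold ofList; decide)
            · 
              exact absurd (hsp _ (by unfold D42; simp : ofList [0, 1, 2, 3] ∈ D42) 0 (by unfold IsTopOf ofList; decide) 3 2 (Or.inr ⟨h03, h23⟩)) (by unfold ofList; decide)
          · 
            rcases h23 with h23 | h23
            · 
              exact irr 0 (tr h03 (tr h13 h01))
            · 
              exact irr 0 (tr h03 (tr h13 h01))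
        · 
          rcases h13 with h13 | h13
          · 
            rcases h23 with h23 | h23
            · 
              exact irr 0 (tr h02 (tr h12 h01))
            · 
              exact irr 0 (tr h02 (tr h12 h01))
          · 
            rcases h23 with h23 | h23
            · 
              exact irr 0 (tr h02 (tr h12 h01))
            · 
              exact irr 0 (tr h02 (tr h12 h01))
      · 
        rcases h12 with h12 | h12
        · 
          rcases h13 with h13 | h13
          · 
            rcases h23 with h23 | h23
            · 
              exact irr 0 (tr h02 (tr h23 h03))
            · 
              exact absurd (hsp _ (by unfold D42; simp : ofList [0, 1, 2, 3] ∈ D42) 0 (by unfold IsTopOf ofList; decide) 3 1 (Or.inl ⟨h13, h03⟩)) (by unfold ofList; decide)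
          · 
            rcases h23 with h23 | h23
            · 
              exact irr 0 (tr h02 (tr h23 h03))
            · 
              exact absurd (hsp _ (by unfold D42; simp : ofList [1, 2, 0, 3] ∈ D42) 1 (by unfold IsTopOf ofList; decide) 0 2 (Or.inr ⟨h01, h02⟩)) (by unfold ofList; decide)
        · 
          rcases h13 with h13 | h13
          · 
            rcases h23 with h23 | h23
            · 
              exact irr 0 (tr h02 (tr h12 h01))
            · 
              exact irr 0 (tr h02 (tr h12 h01))
          · 
            rcases h23 with h23 | h23
            · 
              exact irr 0 (tr h02 (tr h12 h01))
            · 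
              exact irr 0 (tr h02 (tr h12 h01))
    · 
      rcases h03 with h03 | h03
      · 
        rcases h12 with h12 | h12
        · 
          rcases h13 with h13 | h13
          · 
            rcases h23 with h23 | h23
            · 
              exact absurd (hsp _ (by unfold D42; simp : ofList [0, 1, 2, 3] ∈ D42) 0 (by unfold IsTopOf ofList; decide) 2 1 (Or.inl ⟨h12, h02⟩)) (by unfold ofList; decide)
            · 
              exact irr 0 (tr h03 (tr h23 h02))
          · 
            rcases h23 with h23 | h23
            · 
              exact irr 0 (tr h03 (tr h13 h01))
            · 
              exact irr 0 (tr h03 (tr h13 h01))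
        · 
          rcases h13 with h13 | h13
          · 
            rcases h23 with h23 | h23
            · 
              exact absurd (hsp _ (by unfold D42; simp : ofList [1, 2, 3, 0] ∈ D42) 1 (by unfold IsTopOf ofList; decide) 0 3 (Or.inr ⟨h01, h03⟩)) (by unfold ofList; decide)
            · 
              exact irr 0 (tr h03 (tr h23 h02))
          · 
            rcases h23 with h23 | h23
            · 
              exact irr 0 (tr h03 (tr h13 h01))
            · 
              exact irr 0 (tr h03 (tr h13 h01))
      · 
        rcases h12 with h12 | h12
        · 
          rcases h13 with h13 | h13
          · 
            rcases h23 with h23 | h23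
            · 
              exact absurd (hsp _ (by unfold D42; simp : ofList [0, 1, 2, 3] ∈ D42) 0 (by unfold IsTopOf ofList; decide) 2 1 (Or.inl ⟨h12, h02⟩)) (by unfold ofList; decide)
            · 
              exact absurd (hsp _ (by unfold D42; simp : ofList [0, 1, 2, 3] ∈ D42) 0 (by unfold IsTopOf ofList; decide) 2 1 (Or.inl ⟨h12, h02⟩)) (by unfold ofList; decide)
          · 
            rcases h23 with h23 | h23
            · 
              exact irr 1 (tr h12 (tr h23 h13))
            · 
              exact absurd (hsp _ (by unfold D42; simp : ofList [0, 1, 2, 3] ∈ D42) 0 (by unfold IsTopOf ofList; decide) 2 1 (Or.inl ⟨h12, h02⟩)) (by unfold ofList; decide)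
        · 
          rcases h13 with h13 | h13
          · 
            rcases h23 with h23 | h23
            · 
              exact absurd (hsp _ (by unfold D42; simp : ofList [0, 1, 2, 3] ∈ D42) 0 (by unfold IsTopOf ofList; decide) 3 1 (Or.inl ⟨h13, h03⟩)) (by unfold ofList; decide)
            · 
              exact irr 1 (tr h13 (tr h23 h12))
          · 
            rcases h23 with h23 | h23
            · 
              exact absurd (hsp _ (by unfold D42; simp : ofList [0, 1, 2, 3] ∈ D42) 0 (by unfold IsTopOf ofList; decide) 3 2 (Or.inl ⟨h23, h03⟩)) (by unfold ofList; decide)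
            · 
              exact absurd (hsp _ (by unfold D42; simp : ofList [1, 3, 2, 0] ∈ D42) 1 (by unfold IsTopOf ofList; decide) 2 3 (Or.inl ⟨h23, h12⟩)) (by unfold ofList; decide)
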